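/- Let S and r be parameters with 0 < S < 4r, and let u₀ be the standing wave. If h : ℝ → ℝ is a bounded, twice continuously differentiable function satisfying (Lh)(x) = 0 for all x ∈ ℝ, then there exists a real number μ such that h(x) = μ·u₀'(x) for all x ∈ ℝ. -/

import Mathlib

open Real Filter Topology

noncomputable def fpoly (u : ℝ) : ℝ := u * (2 * u - 1) * (1 - u)

noncomputable def Lop (S r : ℝ) (u₀ h : ℝ → ℝ) : ℝ → ℝ := fun x =>
  deriv (deriv h) x + (4 * S / r) * deriv u₀ x * (2 * u₀ x - 1) * deriv h x
    + S * (deriv fpoly (u₀ x) + (4 / r) * (deriv u₀ x) ^ 2) * h x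

theorem kernel_of_L (S r : ℝ) (hS : 0 < S) (hSr : S < 4 * r)
    (u₀ : ℝ → ℝ) (hu : ContDiff ℝ 2 u₀)
    (hode : ∀ x : ℝ, deriv (deriv u₀) x + S * fpoly (u₀ x)
      + (2 * S / r) * (2 * u₀ x - 1) * (deriv u₀ x) ^ 2 = 0)
    (hlim1 : Tendsto u₀ atBot (𝓝 1)) (hlim0 : Tendsto u₀ atTop (𝓝 0))
    (hnorm : u₀ 0 = 1 / 2) (hmono : StrictAnti u₀)
    (hbound : ∀ x : ℝ, 0 < u₀ x ∧ u₀ x < 1)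
    (h : ℝ → ℝ) (hh : ContDiff ℝ 2 h) (hhb : ∃ M : ℝ, ∀ x : ℝ, |h x| ≤ M)
    (hker : ∀ x : ℝ, Lop S r u₀ h x = 0) :
    ∃ μ : ℝ, ∀ x : ℝ, h x = μ * deriv u₀ x := by
  have hr : 0 < r := by linarith
  set ψ : ℝ → ℝ := deriv u₀ with hψdef
  -- basic differentiability
  have hu2 : ContDiff ℝ (1+1) u₀ := by norm_num at hu ⊢; exact hu
  have hud : Differentiable ℝ u₀ := (contDiff_succ_iff_deriv.mp hu2).1
  have hψ1 : ContDiff ℝ 1 ψ := (contDiff_succ_iff_deriv.mp hu2).2.2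
  have hψd : Differentiable ℝ ψ := hψ1.differentiable one_ne_zero
  have hψc : Continuous ψ := hψd.continuous
  have huc : Continuous u₀ := hud.continuous
  have hh2 : ContDiff ℝ (1+1) h := by norm_num at hh ⊢; exact hh
  have hhd : Differentiable ℝ h := (contDiff_succ_iff_deriv.mp hh2).1
  have hh'd : Differentiable ℝ (deriv h) := ((contDiff_succ_iff_deriv.mp hh2).2.2).differentiable one_ne_zero
  have hfpd : Differentiable ℝ fpoly := by
    unfold fpoly; fun_prop
  have hfpc : Continuous fpoly := hfpd.continuous
  -- formula for ψ'
  have hψ'eq : ∀ x, deriv ψ x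
      = -(S * fpoly (u₀ x)) - (2 * S / r) * (2 * u₀ x - 1) * (ψ x) ^ 2 := by
    intro x; have := hode x; linarith
  -- u₀ < 1/2 on (0,∞), > 1/2 on (-∞,0)
  have hult : ∀ x : ℝ, 0 < x → u₀ x < 1/2 := fun x hx => hnorm ▸ hmono hx
  have hugt : ∀ x : ℝ, x < 0 → 1/2 < u₀ x := fun x hx => hnorm ▸ hmono hx
  -- sign of ψ' off 0
  have hψ'pos : ∀ x : ℝ, 0 < x → 0 < deriv ψ x := by
    intro x hx
    rw [hψ'eq x]
    have h1 := (hbound x).1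
    have h2 := hult x hx
    have hf : fpoly (u₀ x) < 0 := by
      unfold fpoly
      exact mul_neg_of_neg_of_pos
        (mul_neg_of_pos_of_neg h1 (by linarith)) (by linarith)
    have hc : (2 * S / r) * (2 * u₀ x - 1) * (ψ x) ^ 2 ≤ 0 := by
      apply mul_nonpos_of_nonpos_of_nonneg _ (sq_nonneg _)
      exact le_of_lt (mul_neg_of_pos_of_neg (by positivity) (by linarith))
    have := mul_neg_of_pos_of_neg hS hf
    linarith
  have hψ'neg : ∀ x : ℝ, x < 0 → deriv ψ x < 0 := by
    intro x hx
    rw [hψ'eq x]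
    have h1 := (hbound x).2
    have h2 := hugt x hx
    have hf : 0 < fpoly (u₀ x) := by
      unfold fpoly
      exact mul_pos (mul_pos (by linarith) (by linarith)) (by linarith)
    have hc : 0 ≤ (2 * S / r) * (2 * u₀ x - 1) * (ψ x) ^ 2 := by
      apply mul_nonneg _ (sq_nonneg _)
      exact le_of_lt (mul_pos (by positivity) (by linarith))
    have := mul_pos hS hf
    linarith
  -- ψ < 0 everywhere
  have hψneg : ∀ x : ℝ, ψ x < 0 := by
    intro x₀
    by_contra hc
    push_neg at hc   -- 0 ≤ ψ x₀
    -- in all cases, find a ray where u₀ is strictly monotone increasing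
    rcases le_or_gt 0 x₀ with hx₀ | hx₀
    · -- ψ strictly increasing on [x₀,∞), so ψ > 0 on (x₀,∞)
      have hmon : StrictMonoOn ψ (Set.Ici x₀) := by
        apply strictMonoOn_of_deriv_pos (convex_Ici x₀) (hψc.continuousOn)
        intro x hx
        rw [interior_Ici] at hx
        exact hψ'pos x (lt_of_le_of_lt hx₀ hx)
      have hψpos : ∀ x ∈ Set.Ioi x₀, 0 < ψ x := by
        intro x hx
        exact lt_of_le_of_lt hc (hmon (Set.self_mem_Ici) (Set.mem_Ici.mpr (le_of_lt hx)) hx)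
      have humon : StrictMonoOn u₀ (Set.Ici x₀) := by
        apply strictMonoOn_of_deriv_pos (convex_Ici x₀) (huc.continuousOn)
        intro x hx
        rw [interior_Ici] at hx
        exact hψpos x hx
      have := humon (Set.self_mem_Ici) (Set.mem_Ici.mpr (by linarith : x₀ ≤ x₀ + 1)) (by linarith)
      have := hmono (by linarith : x₀ < x₀ + 1)
      linarith
    · -- ψ strictly decreasing on (-∞,x₀], so ψ > 0 on (-∞,x₀)
      have hmon : StrictAntiOn ψ (Set.Iic x₀) := by
        apply strictAntiOn_of_deriv_neg (convex_Iic x₀) (hψc.continuousOn)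
        intro x hx
        rw [interior_Iic] at hx
        exact hψ'neg x (lt_trans hx hx₀)
      have hψpos : ∀ x ∈ Set.Iio x₀, 0 < ψ x := by
        intro x hx
        exact lt_of_le_of_lt hc (hmon (Set.mem_Iic.mpr (le_of_lt hx)) (Set.self_mem_Iic) hx)
      have humon : StrictMonoOn u₀ (Set.Iic x₀) := by
        apply strictMonoOn_of_deriv_pos (convex_Iic x₀) (huc.continuousOn)
        intro x hx
        rw [interior_Iic] at hx
        exact hψpos x hx
      have := humon (Set.mem_Iic.mpr (by linarith : x₀ - 1 ≤ x₀)) (Set.self_mem_Iic) (by linarith)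
      have := hmono (by linarith : x₀ - 1 < x₀)
      linarith
  -- ψ monotone on [0,∞)
  have hψmono : MonotoneOn ψ (Set.Ici (0:ℝ)) := by
    apply monotoneOn_of_deriv_nonneg (convex_Ici 0) (hψc.continuousOn)
      (hψd.differentiableOn)
    intro x hx
    rw [interior_Ici] at hx
    exact le_of_lt (hψ'pos x hx)
  -- ψ → 0 at +∞
  have hψlim : Tendsto ψ atTop (𝓝 0) := by
    rw [tendsto_order]
    constructor
    · intro b hb
      -- b < 0; find x₀ ≥ 0 with ψ x₀ > b
      by_cases hex : ∃ x₀ : ℝ, 0 ≤ x₀ ∧ b < ψ x₀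
      · obtain ⟨x₀, hx₀, hbx⟩ := hex
        filter_upwards [eventually_ge_atTop x₀] with x hx
        exact lt_of_lt_of_le hbx (hψmono (Set.mem_Ici.mpr hx₀)
          (Set.mem_Ici.mpr (le_trans hx₀ hx)) hx)
      · push_neg at hex
        exfalso
        -- ψ ≤ b < 0 on [0,∞): u₀ x + (-b) x antitone
        have hder : ∀ x : ℝ, HasDerivAt (fun x => u₀ x - b * x) (ψ x - b) x := by
          intro x
          exact ((hud x).hasDerivAt.sub ((hasDerivAt_id x).const_mul b)).congr_deriv (by rw [mul_one])
        have hanti : AntitoneOn (fun x => u₀ x - b * x) (Set.Ici (0:ℝ)) := by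
          apply antitoneOn_of_deriv_nonpos (convex_Ici 0)
            (Continuous.continuousOn (by continuity))
            (fun x _ => (hder x).differentiableAt.differentiableWithinAt)
          intro x hx
          rw [interior_Ici] at hx
          rw [(hder x).deriv]
          have := hex x (le_of_lt hx)
          linarith
        set X : ℝ := 1 / (-b) with hX
        have hbneg : 0 < -b := by linarith
        have hX0 : 0 < X := by positivity
        have := hanti (Set.self_mem_Ici) (Set.mem_Ici.mpr (le_of_lt hX0)) (le_of_lt hX0)
        -- u₀ X - b * X ≤ u₀ 0
        have hbX : b * X = -1 := by
          rw [hX, mul_one_div, div_neg, div_self (ne_of_lt hb)]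
        have h1 := (hbound X).1
        simp only at this
        rw [hnorm] at this
        nlinarith
    · intro b hb
      filter_upwards with x
      exact lt_trans (hψneg x) hb
  -- ψ' → 0 at +∞
  have hψ'lim : Tendsto (deriv ψ) atTop (𝓝 0) := by
    have key : Tendsto (fun x => -(S * fpoly (u₀ x)) - (2 * S / r) * (2 * u₀ x - 1) * (ψ x) ^ 2)
        atTop (𝓝 (-(S * fpoly 0) - (2 * S / r) * (2 * 0 - 1) * (0:ℝ) ^ 2)) := by
      apply Tendsto.sub
      · exact (tendsto_const_nhds.mul ((hfpc.tendsto 0).comp hlim0)).neg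
      · exact (tendsto_const_nhds.mul
          ((tendsto_const_nhds.mul hlim0).sub tendsto_const_nhds)).mul (hψlim.pow 2)
    have : (-(S * fpoly 0) - (2 * S / r) * (2 * 0 - 1) * (0:ℝ) ^ 2) = 0 := by
      unfold fpoly; ring
    rw [this] at key
    exact Tendsto.congr (fun x => (hψ'eq x).symm) key
  -- coefficients of the linearized operator
  set p : ℝ → ℝ := fun x => 4 * S / r * ψ x * (2 * u₀ x - 1) with hpdef
  set q : ℝ → ℝ := fun x => S * (deriv fpoly (u₀ x) + 4 / r * (ψ x) ^ 2) with hqdef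
  have hh''eq : ∀ x, deriv (deriv h) x = -(p x * deriv h x) - q x * h x := by
    intro x
    have := hker x
    unfold Lop at this
    simp only [hpdef, hqdef, ← hψdef] at this ⊢
    linarith
  have hh''at : ∀ x, HasDerivAt (deriv h) (-(p x * deriv h x) - q x * h x) x := by
    intro x
    exact hh''eq x ▸ (hh'd x).hasDerivAt
  -- ψ also solves the linearized equation
  have hRd : ∀ x, HasDerivAt (fun y => -(S * fpoly (u₀ y)) - 2 * S / r * (2 * u₀ y - 1) * (ψ y) ^ 2)
      (-(p x * deriv ψ x) - q x * ψ x) x := by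
    intro x
    have h1 : HasDerivAt (fun y => fpoly (u₀ y)) (deriv fpoly (u₀ x) * ψ x) x :=
      ((hfpd (u₀ x)).hasDerivAt).comp x (hud x).hasDerivAt
    have h2 : HasDerivAt (fun y => 2 * u₀ y - 1) (2 * ψ x) x :=
      ((hud x).hasDerivAt.const_mul 2).sub_const 1
    have h3 : HasDerivAt (fun y => (ψ y) ^ 2) (2 * ψ x * deriv ψ x) x := by
      exact ((hψd x).hasDerivAt.pow 2).congr_deriv (by simp)
    have hcomb := ((h1.const_mul S).neg).sub ((h2.mul h3).const_mul (2 * S / r))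
    have hfun : (fun y => -(S * fpoly (u₀ y)) - 2 * S / r * (2 * u₀ y - 1) * (ψ y) ^ 2)
        = (fun y => -(S * fpoly (u₀ y)) - 2 * S / r * ((2 * u₀ y - 1) * (ψ y) ^ 2)) := by
      funext y; ring
    rw [hfun]
    refine hcomb.congr_deriv (Eq.symm ?_)
    rw [hpdef, hqdef]
    field_simp
    ring
  have hψ'' : ∀ x, HasDerivAt (deriv ψ) (-(p x * deriv ψ x) - q x * ψ x) x := by
    intro x
    apply HasDerivAt.congr_of_eventuallyEq (hRd x)
    filter_upwards with y using (hψ'eq y)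
  -- the (weighted) Wronskian
  set k : ℝ := 4 * S / r with hk
  set W : ℝ → ℝ := fun x => Real.exp (k * ((u₀ x) ^ 2 - u₀ x)) *
    (deriv h x * ψ x - h x * deriv ψ x) with hWdef
  have hWd : ∀ x, HasDerivAt W 0 x := by
    intro x
    have hin : HasDerivAt (fun y => k * ((u₀ y) ^ 2 - u₀ y)) (k * (2 * u₀ x * ψ x - ψ x)) x := by
      have : HasDerivAt (fun y => (u₀ y) ^ 2 - u₀ y) (2 * u₀ x * ψ x - ψ x) x := by
        have := (((hud x).hasDerivAt.pow 2).sub (hud x).hasDerivAt)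
        exact this.congr_deriv (by simp [hψdef])
      exact this.const_mul k
    have he := hin.exp
    have hw2 : HasDerivAt (fun y => deriv h y * ψ y - h y * deriv ψ y)
        (((-(p x * deriv h x) - q x * h x) * ψ x + deriv h x * deriv ψ x)
          - ((deriv h x * deriv ψ x) + h x * (-(p x * deriv ψ x) - q x * ψ x))) x :=
      ((hh''at x).mul (hψd x).hasDerivAt).sub ((hhd x).hasDerivAt.mul (hψ'' x))
    rw [hWdef]
    refine (he.mul hw2).congr_deriv (Eq.symm ?_)
    rw [hpdef]
    field_simp
    ring
  have hWconst : ∀ x, W x = W 0 :=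
    fun x => is_const_of_deriv_eq_zero (fun y => (hWd y).differentiableAt)
      (fun y => (hWd y).deriv) x 0
  -- mean value points
  obtain ⟨M, hM⟩ := hhb
  have hM0 : 0 ≤ M := le_trans (abs_nonneg _) (hM 0)
  have hMVT : ∀ n : ℕ, ∃ c : ℝ, (n : ℝ) < c ∧ deriv h c = h ((n : ℝ) + 1) - h n := by
    intro n
    obtain ⟨c, hc, hceq⟩ := exists_hasDerivAt_eq_slope h (deriv h)
      (by linarith : (n : ℝ) < (n : ℝ) + 1) (hhd.continuous.continuousOn)
      (fun x _ => (hhd x).hasDerivAt)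
    refine ⟨c, hc.1, ?_⟩
    rw [hceq]
    field_simp
    ring
  choose c hc1 hc2 using hMVT
  have hctop : Tendsto c atTop atTop :=
    tendsto_atTop_mono (fun n => le_of_lt (hc1 n)) tendsto_natCast_atTop_atTop
  have hWbnd : ∀ n : ℕ, ‖W (c n)‖ ≤ 2 * M * |ψ (c n)| + M * |deriv ψ (c n)| := by
    intro n
    rw [Real.norm_eq_abs, hWdef]
    simp only
    rw [abs_mul]
    have hexp : |Real.exp (k * ((u₀ (c n)) ^ 2 - u₀ (c n)))| ≤ 1 := by
      rw [abs_of_pos (Real.exp_pos _), Real.exp_le_one_iff]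
      have h1 := (hbound (c n)).1
      have h2 := (hbound (c n)).2
      have hk0 : 0 < k := by rw [hk]; positivity
      have hu2' : u₀ (c n) ^ 2 < u₀ (c n) := by nlinarith
      exact mul_nonpos_of_nonneg_of_nonpos (le_of_lt hk0) (by linarith)
    have habs : |deriv h (c n) * ψ (c n) - h (c n) * deriv ψ (c n)|
        ≤ 2 * M * |ψ (c n)| + M * |deriv ψ (c n)| := by
      refine le_trans (abs_sub _ _) ?_
      rw [abs_mul, abs_mul]
      have hd : |deriv h (c n)| ≤ 2 * M := by
        rw [hc2 n]
        refine le_trans (abs_sub _ _) ?_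
        linarith [hM ((n : ℝ) + 1), hM (n : ℝ)]
      have := hM (c n)
      have := abs_nonneg (ψ (c n))
      have := abs_nonneg (deriv ψ (c n))
      nlinarith
    calc |Real.exp (k * ((u₀ (c n)) ^ 2 - u₀ (c n)))| * |deriv h (c n) * ψ (c n) - h (c n) * deriv ψ (c n)|
        ≤ 1 * (2 * M * |ψ (c n)| + M * |deriv ψ (c n)|) := by
          apply mul_le_mul hexp habs (abs_nonneg _) (by norm_num)
      _ = 2 * M * |ψ (c n)| + M * |deriv ψ (c n)| := by ring
  have hWlim : Tendsto (fun n => W (c n)) atTop (𝓝 0) := by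
    apply squeeze_zero_norm hWbnd
    have h1 : Tendsto (fun n => ψ (c n)) atTop (𝓝 0) := hψlim.comp hctop
    have h2 : Tendsto (fun n => deriv ψ (c n)) atTop (𝓝 0) := hψ'lim.comp hctop
    have := (h1.abs.const_mul (2 * M)).add (h2.abs.const_mul M)
    simpa using this
  have hW0 : W 0 = 0 := by
    have hconst : (fun n : ℕ => W (c n)) = fun _ => W 0 := funext fun n => hWconst (c n)
    rw [hconst] at hWlim
    exact tendsto_nhds_unique tendsto_const_nhds hWlim
  have hzero : ∀ x, deriv h x * ψ x - h x * deriv ψ x = 0 := by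
    intro x
    have hx : W x = 0 := (hWconst x).trans hW0
    rw [hWdef] at hx
    simp only at hx
    rcases mul_eq_zero.mp hx with h1 | h2
    · exact absurd h1 (Real.exp_ne_zero _)
    · exact h2
  -- conclude
  refine ⟨h 0 / ψ 0, fun x => ?_⟩
  have hvd : ∀ y, HasDerivAt (fun y => h y / ψ y) 0 y := by
    intro y
    have := ((hhd y).hasDerivAt).div ((hψd y).hasDerivAt) (ne_of_lt (hψneg y))
    refine this.congr_deriv (Eq.symm ?_)
    rw [eq_comm, div_eq_zero_iff]
    left
    exact hzero y
  have hconst : h x / ψ x = h 0 / ψ 0 :=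
    is_const_of_deriv_eq_zero (fun y => (hvd y).differentiableAt)
      (fun y => (hvd y).deriv) x 0
  rw [← hconst]
  exact (div_mul_cancel₀ _ (ne_of_lt (hψneg x))).symm
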